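/- A K_{1,3}-saturated graph on n vertices has either n or n-1 edges. -/

import Mathlib

/-- The graph obtained from `G` by adding the edge `uv`. -/
def addEdge {V : Type*} (G : SimpleGraph V) (u v : V) : SimpleGraph V :=
  G ⊔ SimpleGraph.fromEdgeSet {s(u, v)}

/-- A `K_{1,3}`-saturated graph on `n` vertices has `n` or `n-1` edges. -/
theorem stmt5 {V : Type*} [Fintype V] (n : ℕ) (hcard : Fintype.card V = n)
    (G : SimpleGraph V)
    (hdeg : ∀ v : V, (G.neighborSet v).ncard ≤ 2)
    (hsat : ∀ u v : V, u ≠ v → ¬ G.Adj u v →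
      ∃ w, 3 ≤ ((addEdge G u v).neighborSet w).ncard) :
    G.edgeSet.ncard = n ∨ G.edgeSet.ncard = n - 1 := by
  classical
  have hdegncard : ∀ v : V, G.degree v = (G.neighborSet v).ncard := by
    intro v
    rw [Set.ncard_eq_toFinset_card']
    simp [SimpleGraph.degree, SimpleGraph.neighborFinset]
  have hdegree : ∀ v : V, G.degree v ≤ 2 := fun v => (hdegncard v) ▸ hdeg v
  -- key: any two nonadjacent distinct vertices, one has degree 2
  have key : ∀ u v : V, u ≠ v → ¬ G.Adj u v → G.degree u = 2 ∨ G.degree v = 2 := by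
    intro u v huv hadj
    obtain ⟨w, hw⟩ := hsat u v huv hadj
    have hsub : ∀ a b : V, 3 ≤ ((addEdge G u v).neighborSet a).ncard →
        (addEdge G u v).neighborSet a ⊆ G.neighborSet a ∪ {b} → G.degree a = 2 := by
      intro a b h3 h
      have h1 : ((addEdge G u v).neighborSet a).ncard ≤
          (G.neighborSet a).ncard + ({b} : Set V).ncard :=
        le_trans (Set.ncard_le_ncard h (Set.toFinite _)) (Set.ncard_union_le _ _)
      rw [Set.ncard_singleton] at h1
      have h4 := hdegree a
      rw [hdegncard] at h4 ⊢
      omega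
    have hcases : w = u ∨ w = v ∨ (w ≠ u ∧ w ≠ v) := by tauto
    rcases hcases with hwu | hwv | ⟨h1, h2⟩
    · left
      rw [← hwu]
      apply hsub w v hw
      intro x hx
      simp only [addEdge, SimpleGraph.neighborSet, SimpleGraph.sup_adj,
        SimpleGraph.fromEdgeSet_adj, Set.mem_singleton_iff, Set.mem_setOf_eq] at hx
      rcases hx with h | ⟨h, hne⟩
      · exact Set.mem_union_left _ h
      · rcases Sym2.eq_iff.mp h with ⟨ha, hb⟩ | ⟨ha, hb⟩
        · exact Set.mem_union_right _ (by simp [hb])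
        · exact absurd (hwu ▸ hb.symm : w = x) hne
    · right
      rw [← hwv]
      apply hsub w u hw
      intro x hx
      simp only [addEdge, SimpleGraph.neighborSet, SimpleGraph.sup_adj,
        SimpleGraph.fromEdgeSet_adj, Set.mem_singleton_iff, Set.mem_setOf_eq] at hx
      rcases hx with h | ⟨h, hne⟩
      · exact Set.mem_union_left _ h
      · rcases Sym2.eq_iff.mp h with ⟨ha, hb⟩ | ⟨ha, hb⟩
        · exact absurd (hwv ▸ hb.symm : w = x) hne
        · exact Set.mem_union_right _ (by simp [hb])
    · exfalso
      have heq : (addEdge G u v).neighborSet w = G.neighborSet w := by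
        ext x
        simp only [addEdge, SimpleGraph.neighborSet, SimpleGraph.sup_adj,
          SimpleGraph.fromEdgeSet_adj, Set.mem_singleton_iff, Set.mem_setOf_eq]
        constructor
        · rintro (h | ⟨h, hne⟩)
          · exact h
          · rcases Sym2.eq_iff.mp h with ⟨ha, hb⟩ | ⟨ha, hb⟩
            · exact absurd ha h1
            · exact absurd ha h2
        · exact fun h => Or.inl h
      rw [heq] at hw
      have := hdeg w
      omega
  -- deficiency
  set D : ℕ := ∑ v : V, (2 - G.degree v) with hD
  have hsum : ∑ v : V, G.degree v = 2 * G.edgeFinset.card :=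
    SimpleGraph.sum_degrees_eq_twice_card_edges G
  have hpart : D + ∑ v : V, G.degree v = 2 * n := by
    rw [hD, ← Finset.sum_add_distrib]
    have : ∀ v : V, (2 - G.degree v) + G.degree v = 2 := fun v =>
      Nat.sub_add_cancel (hdegree v)
    simp only [this]
    simp [Finset.sum_const, hcard, mul_comm]
  have hDle : D ≤ 2 := by
    by_cases hz : ∃ z : V, G.degree z = 0
    · obtain ⟨z, hz⟩ := hz
      have hrest : ∀ v : V, v ≠ z → G.degree v = 2 := by
        intro v hv
        have hna : ¬ G.Adj z v := by
          intro h
          have : v ∈ G.neighborFinset z := by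
            rw [SimpleGraph.mem_neighborFinset]; exact h
          have hc : G.neighborFinset z = ∅ := Finset.card_eq_zero.mp hz
          rw [hc] at this
          exact absurd this (Finset.notMem_empty v)
        rcases key z v (Ne.symm hv) hna with h | h
        · omega
        · exact h
      have : D = 2 - G.degree z := by
        rw [hD]
        apply Finset.sum_eq_single z
        · intro b _ hb
          simp [hrest b hb]
        · intro h
          exact absurd (Finset.mem_univ z) h
      rw [this, hz]
    · push_neg at hz
      have hterm : ∀ v : V, (2 - G.degree v) = if G.degree v = 1 then 1 else 0 := by
        intro v
        have h1 := hdegree v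
        have h2 := hz v
        by_cases h : G.degree v = 1 <;> simp [h] <;> omega
      have hDeq : D = (Finset.univ.filter (fun v => G.degree v = 1)).card := by
        rw [hD]
        simp only [hterm]
        rw [Finset.card_filter]
      rw [hDeq]
      by_contra hgt
      push_neg at hgt
      obtain ⟨a, ha, b, hb, c, hc, hab, hac, hbc⟩ := Finset.two_lt_card.mp hgt
      simp only [Finset.mem_filter, Finset.mem_univ, true_and] at ha hb hc
      have hadjb : G.Adj a b := by
        by_contra h
        rcases key a b hab h with h' | h' <;> omega
      have hadjc : G.Adj a c := by
        by_contra h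
        rcases key a c hac h with h' | h' <;> omega
      have : 1 < G.degree a := by
        apply Finset.one_lt_card.mpr
        exact ⟨b, (SimpleGraph.mem_neighborFinset _ _ _).mpr hadjb,
          c, (SimpleGraph.mem_neighborFinset _ _ _).mpr hadjc, hbc⟩
      omega
  have hE : G.edgeSet.ncard = G.edgeFinset.card := by
    rw [Set.ncard_eq_toFinset_card']
    congr 1
  rw [hE]
  omega
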